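/- Suppose {a_n}_{n=0}^∞ is a Stieltjes moment sequence with representing measure μ, κ is an integer ≥ 2, {a_n^{1/κ}}_{n=0}^∞ is a Stieltjes moment sequence with representing measure ν, and μ((θ1,θ2)) = 0 for some real θ1, θ2 with 0 < θ1 < θ2 < θ3 := sup supp μ < ∞. Set α = (θ1/θ3)·θ3^{1/κ}, β = θ2^{1/κ}, ι_s = 1 + ⌊log(θ3/θ1)/log(θ3/θ2)⌋ and ι_s* = 1 + ⌊log(θ3/θ2)/log(θ2/θ1)⌋. If any of the following holds: (i) κ ≥ ι_s* and β ∈ supp ν; (ii) ι_s ≥ ι_s* and β ∈ supp ν; (iii) ι_s ≥ 3 and β ∈ supp ν; (iv) ι_s ≥ 4; (v) ι_s* = 1; then ν((α,β)) = 0. -/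

import Mathlib

open MeasureTheory

/-- The closed support of a Borel measure: the set of points all of whose open
neighbourhoods have positive measure. -/
def msupport {X : Type*} [TopologicalSpace X] [MeasurableSpace X] (μ : Measure X) : Set X :=
  {x | ∀ U : Set X, IsOpen U → x ∈ U → 0 < μ U}

/-- `μ` is a representing measure (on `[0,∞)`, modelled as a measure on `ℝ` vanishing on
`(-∞,0)`) of the Stieltjes moment sequence `a`. -/
def IsRepMeas (a : ℕ → ℝ) (μ : Measure ℝ) : Prop :=
  (∀ n, 0 ≤ a n) ∧ μ (Set.Iio 0) = 0 ∧
    ∀ n : ℕ, ∫⁻ x, ENNReal.ofReal (x ^ n) ∂μ = ENNReal.ofReal (a n)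

/-- `a` is a Stieltjes moment sequence. -/
def IsStieltjes (a : ℕ → ℝ) : Prop :=
  ∃ μ : Measure ℝ, IsRepMeas a μ

/-- A Stieltjes moment sequence is determinate if it has a unique representing measure. -/
def IsDeterminate (a : ℕ → ℝ) : Prop :=
  ∀ μ ν : Measure ℝ, IsRepMeas a μ → IsRepMeas a ν → μ = ν

open Set
open scoped ENNReal

section Aux

lemma msupport_null {ρ : Measure ℝ} {O : Set ℝ} (hO : ∀ y ∈ O, y ∉ msupport ρ) : ρ O = 0 := by
  have key : ∀ y ∈ O, ∃ q : ℚ × ℚ, y ∈ Ioo (q.1 : ℝ) (q.2 : ℝ) ∧ ρ (Ioo (q.1 : ℝ) (q.2 : ℝ)) = 0 := by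
    intro y hy
    have h := hO y hy
    simp only [msupport, Set.mem_setOf_eq] at h
    push_neg at h
    obtain ⟨U, hUo, hyU, hU0⟩ := h
    obtain ⟨ε, hε, hball⟩ := Metric.isOpen_iff.mp hUo y hyU
    obtain ⟨q1, hq1, hq1'⟩ := exists_rat_btwn (show y - ε < y by linarith)
    obtain ⟨q2, hq2, hq2'⟩ := exists_rat_btwn (show y < y + ε by linarith)
    refine ⟨(q1, q2), ⟨hq1', hq2⟩, le_antisymm ?_ zero_le⟩
    have hsub : Ioo (q1 : ℝ) (q2 : ℝ) ⊆ U := by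
      intro z hz
      apply hball
      rw [Real.ball_eq_Ioo]
      exact ⟨by linarith [hz.1], by linarith [hz.2]⟩
    calc ρ (Ioo (q1 : ℝ) (q2 : ℝ)) ≤ ρ U := measure_mono hsub
      _ ≤ 0 := hU0
  have hsub : O ⊆ ⋃ q ∈ {q : ℚ × ℚ | ρ (Ioo (q.1 : ℝ) (q.2 : ℝ)) = 0}, Ioo (q.1 : ℝ) (q.2 : ℝ) := by
    intro y hy
    obtain ⟨q, hq1, hq2⟩ := key y hy
    exact Set.mem_biUnion hq2 hq1
  refine measure_mono_null hsub ?_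
  exact (measure_biUnion_null_iff (Set.to_countable _)).mpr (fun q hq => hq)

lemma growth_contra {c C r R : ℝ} (hc : 0 < c) (hR : 0 < R) (hrR : R < r)
    (h : ∀ n : ℕ, c * r ^ n ≤ C * R ^ n) : False := by
  have h1 : (1 : ℝ) < r / R := (one_lt_div hR).mpr hrR
  obtain ⟨n, hn⟩ := pow_unbounded_of_one_lt (C / c) h1
  have hRn : (0:ℝ) < R ^ n := pow_pos hR n
  have h2 : c * r ^ n ≤ C * R ^ n := h n
  have h3 : (r / R) ^ n = r ^ n / R ^ n := div_pow r R n
  rw [h3] at hn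
  have h4 : C / c < r ^ n / R ^ n := hn
  have h5 : C * R ^ n < c * r ^ n := by
    rw [div_lt_div_iff₀ hc hRn] at h4
    nlinarith
  linarith

lemma rep_finite {a : ℕ → ℝ} {μ : Measure ℝ} (h : IsRepMeas a μ) : IsFiniteMeasure μ := by
  constructor
  have h0 := h.2.2 0
  simp only [pow_zero, ENNReal.ofReal_one, lintegral_one] at h0
  rw [h0]
  exact ENNReal.ofReal_lt_top

lemma rep_univ {a : ℕ → ℝ} {μ : Measure ℝ} (h : IsRepMeas a μ) :
    μ univ = ENNReal.ofReal (a 0) := by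
  have h0 := h.2.2 0
  simpa only [pow_zero, ENNReal.ofReal_one, lintegral_one] using h0

lemma rep_ae_nonneg {a : ℕ → ℝ} {μ : Measure ℝ} (h : IsRepMeas a μ) : ∀ᵐ x ∂μ, 0 ≤ x := by
  have : μ {x | ¬ (0 ≤ x)} = 0 := by
    have : {x : ℝ | ¬ (0 ≤ x)} = Iio 0 := by ext z; simp only [mem_setOf_eq, mem_Iio, not_le]
    rw [this]; exact h.2.1
  exact (ae_iff).mpr this

lemma moment_integral {a : ℕ → ℝ} {μ : Measure ℝ} (h : IsRepMeas a μ) (n : ℕ) :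
    ∫ x, x ^ n ∂μ = a n := by
  have hae : 0 ≤ᵐ[μ] fun x : ℝ => x ^ n :=
    (rep_ae_nonneg h).mono fun x hx => pow_nonneg hx n
  rw [integral_eq_lintegral_of_nonneg_ae hae
    ((continuous_pow n).measurable.aestronglyMeasurable)]
  rw [h.2.2 n, ENNReal.toReal_ofReal (h.1 n)]

lemma cont_integrable {μ : Measure ℝ} [IsFiniteMeasure μ] {R : ℝ}
    (hae : ∀ᵐ x ∂μ, x ∈ Icc (-R) R) {f : ℝ → ℝ} (hf : Continuous f) : Integrable f μ := by
  obtain ⟨C, hC⟩ := isCompact_Icc.exists_bound_of_continuousOn (hf.continuousOn (s := Icc (-R) R))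
  exact (integrable_const C).mono' hf.aestronglyMeasurable (hae.mono fun x hx => hC x hx)

lemma integral_eq_of_moments {μ₁ μ₂ : Measure ℝ} [IsFiniteMeasure μ₁] [IsFiniteMeasure μ₂]
    {R : ℝ} (h1 : ∀ᵐ x ∂μ₁, x ∈ Icc (-R) R) (h2 : ∀ᵐ x ∂μ₂, x ∈ Icc (-R) R)
    (hm : ∀ n : ℕ, ∫ x, x ^ n ∂μ₁ = ∫ x, x ^ n ∂μ₂) {f : ℝ → ℝ} (hf : Continuous f) :
    ∫ x, f x ∂μ₁ = ∫ x, f x ∂μ₂ := by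
  have hpoly : ∀ p : Polynomial ℝ, ∫ x, p.eval x ∂μ₁ = ∫ x, p.eval x ∂μ₂ := by
    intro p
    have hint : ∀ (μ : Measure ℝ) (_ : IsFiniteMeasure μ) (_ : ∀ᵐ x ∂μ, x ∈ Icc (-R) R),
        ∫ x, p.eval x ∂μ = ∑ i ∈ Finset.range (p.natDegree + 1), p.coeff i * ∫ x, x ^ i ∂μ := by
      intro μ hμfin hμae
      have : ∀ x : ℝ, p.eval x = ∑ i ∈ Finset.range (p.natDegree + 1), p.coeff i * x ^ i := by
        intro x; exact Polynomial.eval_eq_sum_range x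
      rw [integral_congr_ae (Filter.Eventually.of_forall this)]
      rw [integral_finset_sum]
      · refine Finset.sum_congr rfl fun i _ => ?_
        exact integral_const_mul (p.coeff i) _
      · intro i _
        exact (cont_integrable hμae (continuous_pow i)).const_mul _
    rw [hint μ₁ inferInstance h1, hint μ₂ inferInstance h2]
    refine Finset.sum_congr rfl fun i _ => by rw [hm i]
  have key : ∀ ε : ℝ, 0 < ε → |∫ x, f x ∂μ₁ - ∫ x, f x ∂μ₂| ≤ ε := by
    intro ε hε
    set K := (μ₁ univ).toReal + (μ₂ univ).toReal + 1 with hK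
    have hKpos : 0 < K := by positivity
    set ε' := ε / K with hε'
    have hε'pos : 0 < ε' := by positivity
    obtain ⟨p, hp⟩ := exists_polynomial_near_continuousMap (-R) R
      ⟨fun x => f (x : ℝ), hf.comp continuous_subtype_val⟩ ε' hε'pos
    have hpt : ∀ z ∈ Icc (-R) R, |p.eval z - f z| ≤ ε' := by
      intro z hz
      have := (p.toContinuousMapOn (Icc (-R) R) - ⟨fun x => f (x : ℝ),
        hf.comp continuous_subtype_val⟩).norm_coe_le_norm ⟨z, hz⟩
      have h2 := le_of_lt hp
      simp only [ContinuousMap.sub_apply, Polynomial.toContinuousMapOn_apply,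
        Polynomial.toContinuousMap_apply, ContinuousMap.coe_mk] at this
      calc |p.eval z - f z| = ‖p.eval z - f z‖ := rfl
        _ ≤ ‖p.toContinuousMapOn (Icc (-R) R) - ⟨fun x => f (x : ℝ),
            hf.comp continuous_subtype_val⟩‖ := this
        _ ≤ ε' := h2
    have hbound : ∀ (μ : Measure ℝ) (_ : IsFiniteMeasure μ) (_ : ∀ᵐ x ∂μ, x ∈ Icc (-R) R),
        |∫ x, f x ∂μ - ∫ x, p.eval x ∂μ| ≤ ε' * (μ univ).toReal := by
      intro μ hμfin hμae
      rw [← integral_sub (cont_integrable hμae hf) (cont_integrable hμae p.continuous)]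
      have := norm_integral_le_of_norm_le_const (μ := μ)
        (f := fun x => f x - p.eval x) (C := ε') (hμae.mono fun x hx => by
          rw [Real.norm_eq_abs, abs_sub_comm]; exact hpt x hx)
      simpa [Measure.real] using this
    have e1 := hbound μ₁ inferInstance h1
    have e2 := hbound μ₂ inferInstance h2
    have e3 := hpoly p
    calc |∫ x, f x ∂μ₁ - ∫ x, f x ∂μ₂|
        ≤ |∫ x, f x ∂μ₁ - ∫ x, p.eval x ∂μ₁| + |∫ x, p.eval x ∂μ₂ - ∫ x, f x ∂μ₂| := by
          rw [e3]; exact abs_sub_le _ _ _ |>.trans (by rw [abs_sub_comm (∫ x, p.eval x ∂μ₂)])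
      _ ≤ ε' * (μ₁ univ).toReal + ε' * (μ₂ univ).toReal := by
          rw [abs_sub_comm (∫ x, p.eval x ∂μ₂)]; exact add_le_add e1 e2
      _ ≤ ε := by
          have hsum : (μ₁ univ).toReal + (μ₂ univ).toReal = K - 1 := by rw [hK]; ring
          have h9 : ε' * ((μ₁ univ).toReal + (μ₂ univ).toReal) ≤ ε' * K := by
            apply mul_le_mul_of_nonneg_left _ hε'pos.le
            rw [hsum]; linarith
          have hε'K : ε' * K = ε := by rw [hε', div_mul_cancel₀ _ hKpos.ne']
          nlinarith
  by_contra hne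
  have habs : 0 < |∫ x, f x ∂μ₁ - ∫ x, f x ∂μ₂| := abs_pos.mpr (sub_ne_zero.mpr hne)
  have := key (|∫ x, f x ∂μ₁ - ∫ x, f x ∂μ₂| / 2) (by positivity)
  linarith

noncomputable def mconv (ρ σ : Measure ℝ) : Measure ℝ :=
  Measure.map (fun p : ℝ × ℝ => p.1 * p.2) (ρ.prod σ)

noncomputable def mp (ν : Measure ℝ) : ℕ → Measure ℝ
  | 0 => Measure.dirac 1
  | (k+1) => mconv ν (mp ν k)

lemma measurable_mul2 : Measurable (fun p : ℝ × ℝ => p.1 * p.2) :=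
  measurable_fst.mul measurable_snd

lemma mp_finite (ν : Measure ℝ) [IsFiniteMeasure ν] (k : ℕ) : IsFiniteMeasure (mp ν k) := by
  induction k with
  | zero => exact inferInstanceAs (IsFiniteMeasure (Measure.dirac 1))
  | succ k ih =>
    constructor
    have : (mp ν (k+1)) univ = (ν.prod (mp ν k)) ((fun p : ℝ × ℝ => p.1 * p.2) ⁻¹' univ) := by
      exact Measure.map_apply measurable_mul2 MeasurableSet.univ
    rw [this]
    haveI := ih
    exact lt_of_le_of_lt (measure_mono (subset_univ _)) (measure_lt_top _ _)

lemma mp_moment {ν : Measure ℝ} [IsFiniteMeasure ν] (hae : ∀ᵐ y ∂ν, 0 ≤ y) (n : ℕ) :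
    ∀ k : ℕ, ∫⁻ x, ENNReal.ofReal (x ^ n) ∂(mp ν k)
      = (∫⁻ y, ENNReal.ofReal (y ^ n) ∂ν) ^ k := by
  intro k
  induction k with
  | zero =>
    simp only [mp, pow_zero]
    rw [lintegral_dirac' _ (show Measurable fun x : ℝ => ENNReal.ofReal (x ^ n) from
      ENNReal.measurable_ofReal.comp (measurable_id.pow_const n))]
    simp
  | succ k ih =>
    haveI := mp_finite ν k
    have hmeas : Measurable fun x : ℝ => ENNReal.ofReal (x ^ n) :=
      ENNReal.measurable_ofReal.comp (measurable_id.pow_const n)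
    have hmeas2 : Measurable fun p : ℝ × ℝ => ENNReal.ofReal ((p.1 * p.2) ^ n) :=
      ENNReal.measurable_ofReal.comp ((measurable_fst.mul measurable_snd).pow_const n)
    calc ∫⁻ x, ENNReal.ofReal (x ^ n) ∂(mp ν (k+1))
        = ∫⁻ p : ℝ × ℝ, ENNReal.ofReal ((p.1 * p.2) ^ n) ∂(ν.prod (mp ν k)) := by
          rw [show mp ν (k+1) = mconv ν (mp ν k) from rfl, mconv,
            lintegral_map hmeas measurable_mul2]
      _ = ∫⁻ u, ∫⁻ v, ENNReal.ofReal ((u * v) ^ n) ∂(mp ν k) ∂ν := by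
          rw [lintegral_prod _ hmeas2.aemeasurable]
      _ = ∫⁻ u, ENNReal.ofReal (u ^ n) * ∫⁻ v, ENNReal.ofReal (v ^ n) ∂(mp ν k) ∂ν := by
          refine lintegral_congr_ae (hae.mono fun u hu => ?_)
          have : ∀ v : ℝ, ENNReal.ofReal ((u * v) ^ n)
              = ENNReal.ofReal (u ^ n) * ENNReal.ofReal (v ^ n) := by
            intro v
            rw [mul_pow, ENNReal.ofReal_mul (pow_nonneg hu n)]
          simp_rw [this]
          rw [lintegral_const_mul _ hmeas]
      _ = (∫⁻ y, ENNReal.ofReal (y ^ n) ∂ν) ^ (k+1) := by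
          rw [lintegral_mul_const _ hmeas, ih, pow_succ]
          ring

lemma mp_ae {ν : Measure ℝ} [IsFiniteMeasure ν] {M : ℝ} (hM : 1 ≤ M)
    (hae : ∀ᵐ y ∂ν, y ∈ Icc 0 M) (k : ℕ) : ∀ᵐ x ∂(mp ν k), x ∈ Icc 0 (M ^ k) := by
  induction k with
  | zero =>
    rw [show mp ν 0 = Measure.dirac 1 from rfl]
    rw [ae_dirac_iff]
    · simp
    · exact measurableSet_Icc
  | succ k ih =>
    haveI := mp_finite ν k
    rw [ae_iff]
    have hpre : (mp ν (k+1)) {x | ¬ x ∈ Icc 0 (M ^ (k+1))}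
        = (ν.prod (mp ν k)) ((fun p : ℝ × ℝ => p.1 * p.2) ⁻¹' {x | ¬ x ∈ Icc 0 (M ^ (k+1))}) := by
      refine Measure.map_apply measurable_mul2 ?_
      exact (measurableSet_Icc).compl
    rw [hpre]
    have hsub : ((fun p : ℝ × ℝ => p.1 * p.2) ⁻¹' {x | ¬ x ∈ Icc 0 (M ^ (k+1))})
        ⊆ ((Icc (0:ℝ) M)ᶜ ×ˢ univ) ∪ (univ ×ˢ (Icc (0:ℝ) (M ^ k))ᶜ) := by
      intro p hp
      simp only [mem_preimage, mem_setOf_eq] at hp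
      by_contra hcon
      simp only [mem_union, mem_prod, mem_compl_iff, mem_univ, and_true, true_and,
        not_or, not_not] at hcon
      obtain ⟨h1, h2⟩ := hcon
      apply hp
      constructor
      · exact mul_nonneg h1.1 h2.1
      · calc p.1 * p.2 ≤ M * M ^ k := by
              apply mul_le_mul h1.2 h2.2 h2.1 (by linarith)
          _ = M ^ (k+1) := (pow_succ' M k).symm
    refine le_antisymm ?_ zero_le
    calc (ν.prod (mp ν k)) _ ≤ (ν.prod (mp ν k)) (((Icc (0:ℝ) M)ᶜ ×ˢ univ)
          ∪ (univ ×ˢ (Icc (0:ℝ) (M ^ k))ᶜ)) := measure_mono hsub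
      _ ≤ (ν.prod (mp ν k)) ((Icc (0:ℝ) M)ᶜ ×ˢ univ)
          + (ν.prod (mp ν k)) (univ ×ˢ (Icc (0:ℝ) (M ^ k))ᶜ) := measure_union_le _ _
      _ = 0 := by
          rw [Measure.prod_prod, Measure.prod_prod]
          have hν0 : ν ((Icc (0:ℝ) M)ᶜ) = 0 := ae_iff.mp hae
          have hmp0 : (mp ν k) ((Icc (0:ℝ) (M ^ k))ᶜ) = 0 := ae_iff.mp ih
          rw [hν0, hmp0, zero_mul, mul_zero, add_zero]

lemma spt_mconv {ρ σ : Measure ℝ} [SFinite ρ] [SFinite σ] {u v : ℝ} (hu : 0 ≤ u) (hv : 0 ≤ v)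
    (hρ : ∀ ε > 0, 0 < ρ (Ioo (u - ε) (u + ε))) (hσ : ∀ ε > 0, 0 < σ (Ioo (v - ε) (v + ε))) :
    ∀ ε > 0, 0 < (mconv ρ σ) (Ioo (u * v - ε) (u * v + ε)) := by
  intro ε hε
  set δ := min 1 (ε / (u + v + 2)) with hδdef
  have hδpos : 0 < δ := lt_min one_pos (by positivity)
  have hδ1 : δ ≤ 1 := min_le_left _ _
  have hδ2 : δ ≤ ε / (u + v + 2) := min_le_right _ _
  have hbox : (Ioo (u - δ) (u + δ)) ×ˢ (Ioo (v - δ) (v + δ))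
      ⊆ (fun p : ℝ × ℝ => p.1 * p.2) ⁻¹' (Ioo (u * v - ε) (u * v + ε)) := by
    rintro ⟨s, t⟩ ⟨⟨hs1, hs2⟩, ⟨ht1, ht2⟩⟩
    simp only [mem_preimage, mem_Ioo]
    have key : |s * t - u * v| < ε := by
      have h1 : s * t - u * v = s * (t - v) + v * (s - u) := by ring
      have hs : |s| ≤ u + δ := by
        rw [abs_le]; constructor <;> nlinarith
      have htv : |t - v| < δ := by rw [abs_lt]; constructor <;> linarith
      have hsu : |s - u| < δ := by rw [abs_lt]; constructor <;> linarith
      calc |s * t - u * v| = |s * (t - v) + v * (s - u)| := by rw [h1]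
        _ ≤ |s * (t - v)| + |v * (s - u)| := abs_add_le _ _
        _ = |s| * |t - v| + |v| * |s - u| := by rw [abs_mul, abs_mul]
        _ ≤ (u + δ) * δ + v * δ := by
            refine add_le_add ?_ ?_
            · exact mul_le_mul hs htv.le (abs_nonneg _) (by linarith)
            · rw [abs_of_nonneg hv]
              exact mul_le_mul_of_nonneg_left hsu.le hv
        _ ≤ (u + 1) * δ + v * δ := by nlinarith
        _ = (u + v + 1) * δ := by ring
        _ < ε := by
            have h3 : (u + v + 1) * δ ≤ (u + v + 1) * (ε / (u + v + 2)) := by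
              apply mul_le_mul_of_nonneg_left hδ2 (by linarith)
            have h4 : (u + v + 1) * (ε / (u + v + 2)) < ε := by
              have hq : (u + v + 1) / (u + v + 2) < 1 := by
                rw [div_lt_one (by linarith : (0:ℝ) < u + v + 2)]; linarith
              calc (u + v + 1) * (ε / (u + v + 2)) = ((u + v + 1) / (u + v + 2)) * ε := by ring
                _ < 1 * ε := by nlinarith
                _ = ε := one_mul ε
            linarith
    rw [abs_lt] at key
    constructor <;> linarith [key.1, key.2]
  have hmap : (mconv ρ σ) (Ioo (u * v - ε) (u * v + ε))
      = (ρ.prod σ) ((fun p : ℝ × ℝ => p.1 * p.2) ⁻¹' (Ioo (u * v - ε) (u * v + ε))) :=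
    Measure.map_apply measurable_mul2 measurableSet_Ioo
  rw [hmap]
  calc (0 : ℝ≥0∞) < ρ (Ioo (u - δ) (u + δ)) * σ (Ioo (v - δ) (v + δ)) :=
        ENNReal.mul_pos (hρ δ hδpos).ne' (hσ δ hδpos).ne'
    _ = (ρ.prod σ) ((Ioo (u - δ) (u + δ)) ×ˢ (Ioo (v - δ) (v + δ))) :=
        (Measure.prod_prod _ _).symm
    _ ≤ _ := measure_mono hbox

lemma spt_mp {ν : Measure ℝ} [IsFiniteMeasure ν] :
    ∀ l : List ℝ, (∀ y ∈ l, 0 ≤ y ∧ ∀ ε > 0, 0 < ν (Ioo (y - ε) (y + ε))) →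
    ∀ ε > 0, 0 < (mp ν l.length) (Ioo (l.prod - ε) (l.prod + ε)) := by
  intro l
  induction l with
  | nil =>
    intro _ ε hε
    simp only [List.length_nil, List.prod_nil]
    rw [show mp ν 0 = Measure.dirac 1 from rfl]
    rw [Measure.dirac_apply_of_mem (by constructor <;> linarith : (1:ℝ) ∈ Ioo (1 - ε) (1 + ε))]
    norm_num
  | cons y l ih =>
    intro hl ε hε
    have hy := hl y (List.mem_cons_self)
    have hl' : ∀ z ∈ l, 0 ≤ z ∧ ∀ ε > 0, 0 < ν (Ioo (z - ε) (z + ε)) :=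
      fun z hz => hl z (List.mem_cons_of_mem y hz)
    have hprodnn : 0 ≤ l.prod := List.prod_nonneg fun z hz => (hl' z hz).1
    simp only [List.length_cons, List.prod_cons]
    haveI := mp_finite ν l.length
    exact spt_mconv hy.1 hprodnn hy.2 (ih hl') ε hε

lemma key_hole {μ ρ : Measure ℝ} [IsFiniteMeasure μ] [IsFiniteMeasure ρ] {R : ℝ}
    (hμae : ∀ᵐ x ∂μ, x ∈ Icc (-R) R) (hρae : ∀ᵐ x ∂ρ, x ∈ Icc (-R) R)
    (hmom : ∀ n : ℕ, ∫ x, x ^ n ∂μ = ∫ x, x ^ n ∂ρ)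
    {θ1 θ2 p : ℝ} (hp1 : θ1 < p) (hp2 : p < θ2)
    (hspt : ∀ ε > 0, 0 < ρ (Ioo (p - ε) (p + ε)))
    (hhole : μ (Ioo θ1 θ2) = 0) : False := by
  set ε := min (p - θ1) (θ2 - p) with hεdef
  have hεpos : 0 < ε := lt_min (by linarith) (by linarith)
  have hsub : Ioo (p - ε) (p + ε) ⊆ Ioo θ1 θ2 := by
    intro z hz
    have h1 : ε ≤ p - θ1 := min_le_left _ _
    have h2 : ε ≤ θ2 - p := min_le_right _ _
    exact ⟨by linarith [hz.1], by linarith [hz.2]⟩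
  set f : ℝ → ℝ := fun z => max 0 (min 1 (2 - (2 / ε) * |z - p|)) with hfdef
  have hfcont : Continuous f := by
    apply continuous_const.max
    apply continuous_const.min
    exact continuous_const.sub (continuous_const.mul ((continuous_id.sub continuous_const).abs))
  have hf0 : ∀ z, 0 ≤ f z := fun z => le_max_left _ _
  have hf1 : ∀ z, f z ≤ 1 := by
    intro z
    apply max_le (by norm_num)
    exact min_le_left _ _
  have hfone : ∀ z, |z - p| ≤ ε / 2 → f z = 1 := by
    intro z hz
    have h2ε : (0:ℝ) < 2 / ε := by positivity
    have : (2 / ε) * |z - p| ≤ (2 / ε) * (ε / 2) := mul_le_mul_of_nonneg_left hz h2ε.le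
    have h1 : (2 / ε) * (ε / 2) = 1 := by field_simp
    have hge : (1:ℝ) ≤ 2 - (2 / ε) * |z - p| := by rw [h1] at this; linarith
    rw [hfdef]
    simp only []
    rw [min_eq_left hge, max_eq_right (by norm_num : (0:ℝ) ≤ 1)]
  have hfzero : ∀ z, ε ≤ |z - p| → f z = 0 := by
    intro z hz
    have h2ε : (0:ℝ) < 2 / ε := by positivity
    have : (2 / ε) * ε ≤ (2 / ε) * |z - p| := mul_le_mul_of_nonneg_left hz h2ε.le
    have h1 : (2 / ε) * ε = 2 := by field_simp
    have hle : 2 - (2 / ε) * |z - p| ≤ 0 := by rw [h1] at this; linarith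
    rw [hfdef]
    simp only []
    rw [max_eq_left]
    exact le_trans (min_le_right _ _) hle
  have heq : ∫ x, f x ∂μ = ∫ x, f x ∂ρ := integral_eq_of_moments hμae hρae hmom hfcont
  have hupper : ∫ x, f x ∂μ ≤ 0 := by
    have hg : ∀ z, f z ≤ (Ioo θ1 θ2).indicator (fun _ => (1:ℝ)) z := by
      intro z
      by_cases hz : z ∈ Ioo θ1 θ2
      · rw [indicator_of_mem hz]; exact hf1 z
      · rw [indicator_of_notMem hz]
        have : ε ≤ |z - p| := by
          by_contra hcon
          push_neg at hcon
          rw [abs_lt] at hcon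
          exact hz (hsub ⟨by linarith [hcon.1], by linarith [hcon.2]⟩)
        rw [hfzero z this]
    have hgint : Integrable ((Ioo θ1 θ2).indicator (fun _ => (1:ℝ))) μ :=
      (integrable_const (1:ℝ)).indicator measurableSet_Ioo
    calc ∫ x, f x ∂μ ≤ ∫ x, (Ioo θ1 θ2).indicator (fun _ => (1:ℝ)) x ∂μ :=
          integral_mono (cont_integrable hμae hfcont) hgint hg
      _ = (μ (Ioo θ1 θ2)).toReal • (1:ℝ) := by
          rw [integral_indicator_const (1:ℝ) measurableSet_Ioo]
          rfl
      _ = 0 := by rw [hhole]; simp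
  have hlower : 0 < ∫ x, f x ∂ρ := by
    set s := Icc (p - ε/2) (p + ε/2) with hsdef
    have hsmeas : MeasurableSet s := measurableSet_Icc
    have hfs : ∀ z ∈ s, f z = 1 := by
      intro z hz
      apply hfone
      rw [abs_le]
      exact ⟨by linarith [hz.1], by linarith [hz.2]⟩
    have h1 : ∫ x in s, f x ∂ρ = (ρ s).toReal := by
      rw [setIntegral_congr_fun hsmeas hfs, setIntegral_const]
      simp
      rfl
    have h2 : ∫ x in s, f x ∂ρ ≤ ∫ x, f x ∂ρ :=
      setIntegral_le_integral (cont_integrable hρae hfcont)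
        (Filter.Eventually.of_forall hf0)
    have h3 : 0 < (ρ s).toReal := by
      apply ENNReal.toReal_pos
      · have : 0 < ρ (Ioo (p - ε/2) (p + ε/2)) := hspt (ε/2) (by positivity)
        have hsub2 : Ioo (p - ε/2) (p + ε/2) ⊆ s := Ioo_subset_Icc_self
        exact (lt_of_lt_of_le this (measure_mono hsub2)).ne'
      · exact (measure_lt_top ρ s).ne
    linarith
  rw [heq] at hupper
  linarith

lemma lint_upper {ρ : Measure ℝ} {R : ℝ} (hae : ∀ᵐ x ∂ρ, x ∈ Icc 0 R) (n : ℕ) :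
    ∫⁻ x, ENNReal.ofReal (x ^ n) ∂ρ ≤ ENNReal.ofReal (R ^ n) * ρ univ := by
  calc ∫⁻ x, ENNReal.ofReal (x ^ n) ∂ρ ≤ ∫⁻ _, ENNReal.ofReal (R ^ n) ∂ρ := by
        apply lintegral_mono_ae
        exact hae.mono fun x hx =>
          ENNReal.ofReal_le_ofReal (pow_le_pow_left₀ hx.1 hx.2 n)
    _ = ENNReal.ofReal (R ^ n) * ρ univ := lintegral_const _

lemma lint_lower {ρ : Measure ℝ} {w : ℝ} (hw : 0 ≤ w) (n : ℕ) :
    ENNReal.ofReal (w ^ n) * ρ (Ioi w) ≤ ∫⁻ x, ENNReal.ofReal (x ^ n) ∂ρ := by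
  calc ENNReal.ofReal (w ^ n) * ρ (Ioi w)
      = ∫⁻ _ in Ioi w, ENNReal.ofReal (w ^ n) ∂ρ := (setLIntegral_const _ _).symm
    _ ≤ ∫⁻ x in Ioi w, ENNReal.ofReal (x ^ n) ∂ρ := by
        apply setLIntegral_mono (ENNReal.measurable_ofReal.comp (measurable_id.pow_const n))
        intro x hx
        exact ENNReal.ofReal_le_ofReal (pow_le_pow_left₀ hw (le_of_lt hx) n)
    _ ≤ ∫⁻ x, ENNReal.ofReal (x ^ n) ∂ρ := setLIntegral_le_lintegral _ _

lemma theta3_mem {μ : Measure ℝ} {θ3 : ℝ} (hθ3 : IsLUB (msupport μ) θ3) :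
    θ3 ∈ msupport μ := by
  intro U hUo hθ3U
  obtain ⟨ε, hε, hball⟩ := Metric.isOpen_iff.mp hUo θ3 hθ3U
  obtain ⟨s, hsmem, hs1, hs2⟩ := hθ3.exists_between (show θ3 - ε < θ3 by linarith)
  have hsU : s ∈ U := by
    apply hball
    rw [Real.ball_eq_Ioo]
    exact ⟨by linarith, by linarith⟩
  exact hsmem U hUo hsU

lemma rpow_one_div_pow {x : ℝ} (hx : 0 ≤ x) {κ : ℕ} (hκ : κ ≠ 0) :
    (x ^ (1 / (κ : ℝ))) ^ κ = x := by
  have hκℝ : (κ : ℝ) ≠ 0 := Nat.cast_ne_zero.mpr hκ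
  rw [← Real.rpow_natCast (x ^ (1 / (κ : ℝ))) κ, ← Real.rpow_mul hx]
  rw [one_div, inv_mul_cancel₀ hκℝ, Real.rpow_one]

lemma pow_rpow_comm {x : ℝ} (hx : 0 ≤ x) (r : ℝ) (n : ℕ) :
    (x ^ n) ^ r = (x ^ r) ^ n := by
  rw [← Real.rpow_natCast x n, ← Real.rpow_mul hx, mul_comm, Real.rpow_mul hx,
    Real.rpow_natCast]

end Aux

section Endgame
variable {θ1 θ2 θ3 T y β : ℝ} {κ : ℕ}

lemma jchain (hκ : 2 ≤ κ) (h1 : 0 < θ1) (h12 : θ1 < θ2) (h23 : θ2 < θ3)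
    (hTκ : T ^ κ = θ3) (hT : 0 < T)
    (hy0 : 0 < y) (hyl : θ1 / θ3 * T < y) (hyT : y < T) (hyκ : y ^ κ < θ2)
    (KEY2 : ∀ j c : ℕ, j + c = κ → θ1 < y ^ j * T ^ c → y ^ j * T ^ c < θ2 → False) :
    ∃ j0 : ℕ, 2 ≤ j0 ∧ j0 ≤ κ ∧ y ^ j0 * T ^ (κ - j0) ≤ θ1
      ∧ θ2 ≤ y ^ (j0 - 1) * T ^ (κ - (j0 - 1)) := by
  have hθ3 : 0 < θ3 := by linarith
  have hv1 : θ1 < y * T ^ (κ - 1) := by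
    have hTpow : (0:ℝ) < T ^ (κ - 1) := pow_pos hT _
    have h := mul_lt_mul_of_pos_right hyl hTpow
    have hTT : T * T ^ (κ - 1) = T ^ κ := by
      rw [← pow_succ']
      congr 1
      omega
    calc θ1 = θ1 / θ3 * θ3 := by field_simp
      _ = θ1 / θ3 * (T * T ^ (κ - 1)) := by rw [hTT, hTκ]
      _ = θ1 / θ3 * T * T ^ (κ - 1) := by ring
      _ < y * T ^ (κ - 1) := h
  have hex : ∃ j : ℕ, y ^ j * T ^ (κ - j) < θ2 := by
    refine ⟨κ, ?_⟩
    simp only [Nat.sub_self, pow_zero, mul_one]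
    exact hyκ
  classical
  set j0 := Nat.find hex with hj0def
  have hj0P : y ^ j0 * T ^ (κ - j0) < θ2 := Nat.find_spec hex
  have hmin : ∀ m, m < j0 → ¬ (y ^ m * T ^ (κ - m) < θ2) := fun m hm => Nat.find_min hex hm
  have hj0κ : j0 ≤ κ := Nat.find_min' hex (by simp only [Nat.sub_self, pow_zero, mul_one]; exact hyκ)
  have hj00 : j0 ≠ 0 := by
    intro h0
    rw [h0] at hj0P
    simp only [pow_zero, Nat.sub_zero, one_mul] at hj0P
    rw [hTκ] at hj0P
    linarith
  have hj01 : j0 ≠ 1 := by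
    intro h0
    rw [h0] at hj0P
    simp only [pow_one] at hj0P
    exact KEY2 1 (κ - 1) (by omega) (by simpa using hv1) (by simpa using hj0P)
  have hj02 : 2 ≤ j0 := by omega
  refine ⟨j0, hj02, hj0κ, ?_, ?_⟩
  · by_contra hcon
    push_neg at hcon
    exact KEY2 j0 (κ - j0) (by omega) hcon hj0P
  · exact not_lt.mp (hmin (j0 - 1) (by omega))

lemma endgame_v (hκ : 2 ≤ κ) (h1 : 0 < θ1) (h12 : θ1 < θ2) (h23 : θ2 < θ3)
    (hTκ : T ^ κ = θ3) (hT : 0 < T)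
    (hy0 : 0 < y) (hyl : θ1 / θ3 * T < y) (hyT : y < T) (hyκ : y ^ κ < θ2)
    (KEY2 : ∀ j c : ℕ, j + c = κ → θ1 < y ^ j * T ^ c → y ^ j * T ^ c < θ2 → False)
    (hv : θ1 * θ3 < θ2 ^ 2) : False := by
  obtain ⟨j0, hj02, hj0κ, hle, hge⟩ := jchain hκ h1 h12 h23 hTκ hT hy0 hyl hyT hyκ KEY2
  obtain ⟨m, hm⟩ : ∃ m, j0 = m + 2 := ⟨j0 - 2, by omega⟩
  obtain ⟨c, hc⟩ : ∃ c, κ = j0 + c := ⟨κ - j0, by omega⟩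
  subst hm
  have hc1 : κ - (m + 2) = c := by omega
  have hc2 : κ - (m + 1) = c + 1 := by omega
  rw [hc1] at hle
  rw [show m + 2 - 1 = m + 1 from rfl, hc2] at hge
  have hstep : y ^ (m + 1) * T ^ (c + 1) * y = y ^ (m + 2) * T ^ c * T := by ring
  have e1 : θ2 * y ≤ θ1 * T := by
    calc θ2 * y ≤ (y ^ (m + 1) * T ^ (c + 1)) * y := mul_le_mul_of_nonneg_right hge hy0.le
      _ = (y ^ (m + 2) * T ^ c) * T := hstep
      _ ≤ θ1 * T := mul_le_mul_of_nonneg_right hle hT.le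
  have hv1' : θ2 ≤ y * T ^ (κ - 1) := by
    have hybound : y ^ (m + 1) * T ^ (c + 1) ≤ y * T ^ (κ - 1) := by
      have hpow : y ^ m ≤ T ^ m := pow_le_pow_left₀ hy0.le hyT.le m
      have hκ1 : κ - 1 = m + c + 1 := by omega
      calc y ^ (m + 1) * T ^ (c + 1) = y * (y ^ m * T ^ (c + 1)) := by ring
        _ ≤ y * (T ^ m * T ^ (c + 1)) := by
            apply mul_le_mul_of_nonneg_left _ hy0.le
            exact mul_le_mul_of_nonneg_right hpow (pow_pos hT _).le
        _ = y * T ^ (κ - 1) := by rw [hκ1]; ring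
    linarith
  have e2 : θ2 * T ≤ θ3 * y := by
    have h := mul_le_mul_of_nonneg_right hv1' hT.le
    have hκ1 : κ - 1 + 1 = κ := by omega
    have hTT : y * T ^ (κ - 1) * T = θ3 * y := by
      calc y * T ^ (κ - 1) * T = y * (T ^ (κ - 1) * T) := by ring
        _ = y * T ^ (κ - 1 + 1) := by rw [pow_succ]
        _ = y * θ3 := by rw [hκ1, hTκ]
        _ = θ3 * y := by ring
    rw [hTT] at h
    exact h
  have h2pos : (0:ℝ) < θ2 := by linarith
  have A : θ2 * (θ2 * T) ≤ θ2 * (θ3 * y) := mul_le_mul_of_nonneg_left e2 h2pos.le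
  have B : θ3 * (θ2 * y) ≤ θ3 * (θ1 * T) := mul_le_mul_of_nonneg_left e1 (by linarith)
  nlinarith [mul_pos hy0 hT, hT]

lemma endgame_iv (hκ : 2 ≤ κ) (h1 : 0 < θ1) (h12 : θ1 < θ2) (h23 : θ2 < θ3)
    (hTκ : T ^ κ = θ3) (hT : 0 < T)
    (hy0 : 0 < y) (hyl : θ1 / θ3 * T < y) (hyT : y < T) (hyκ : y ^ κ < θ2)
    (KEY2 : ∀ j c : ℕ, j + c = κ → θ1 < y ^ j * T ^ c → y ^ j * T ^ c < θ2 → False)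
    (hiv : θ1 * θ3 ^ 2 ≤ θ2 ^ 3) : False := by
  obtain ⟨j0, hj02, hj0κ, hle, hge⟩ := jchain hκ h1 h12 h23 hTκ hT hy0 hyl hyT hyκ KEY2
  obtain ⟨m, hm⟩ : ∃ m, j0 = m + 2 := ⟨j0 - 2, by omega⟩
  obtain ⟨c, hc⟩ : ∃ c, κ = j0 + c := ⟨κ - j0, by omega⟩
  subst hm
  have hc1 : κ - (m + 2) = c := by omega
  have hc2 : κ - (m + 1) = c + 1 := by omega
  rw [hc1] at hle
  rw [show m + 2 - 1 = m + 1 from rfl, hc2] at hge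
  have h2pos : (0:ℝ) < θ2 := by linarith
  have hθ3pos : (0:ℝ) < θ3 := by linarith
  have hstrict : (y ^ (m + 1) * T ^ (c + 1)) ^ 3 < θ3 ^ 2 * (y ^ (m + 2) * T ^ c) := by
    have hylt : y ^ (2 * m + 1) < T ^ (2 * m + 1) :=
      pow_lt_pow_left₀ hyT hy0.le (by omega)
    have hgt0 : (0:ℝ) < y ^ (m + 2) * T ^ (3 * c + 3) := by positivity
    have hid1 : (y ^ (m + 1) * T ^ (c + 1)) ^ 3
        = (y ^ (m + 2) * T ^ (3 * c + 3)) * y ^ (2 * m + 1) := by ring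
    have hid2 : θ3 ^ 2 * (y ^ (m + 2) * T ^ c)
        = (y ^ (m + 2) * T ^ (3 * c + 3)) * T ^ (2 * m + 1) := by
      rw [← hTκ, hc]; ring
    rw [hid1, hid2]
    exact mul_lt_mul_of_pos_left hylt hgt0
  have h3 : θ2 ^ 3 ≤ (y ^ (m + 1) * T ^ (c + 1)) ^ 3 := by
    apply pow_le_pow_left₀ h2pos.le hge
  have h4 : θ3 ^ 2 * (y ^ (m + 2) * T ^ c) ≤ θ3 ^ 2 * θ1 := by
    apply mul_le_mul_of_nonneg_left hle (by positivity)
  nlinarith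

lemma endgame_C1 (hκ : 2 ≤ κ) (h1 : 0 < θ1) (h12 : θ1 < θ2) (h23 : θ2 < θ3)
    (hTκ : T ^ κ = θ3) (hT : 0 < T) (hβκ : β ^ κ = θ2) (hβ0 : 0 < β)
    (hy0 : 0 < y) (hyl : θ1 / θ3 * T < y) (hyβ : y < β)
    (KEY3 : ∀ j b c : ℕ, j + b + c = κ → θ1 < y ^ j * β ^ b * T ^ c
      → y ^ j * β ^ b * T ^ c < θ2 → False) :
    θ2 ^ (κ + 1) ≤ θ1 ^ κ * θ3 := by
  have hθ3pos : (0:ℝ) < θ3 := by linarith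
  have h2pos : (0:ℝ) < θ2 := by linarith
  have hv1 : θ1 < y * T ^ (κ - 1) := by
    have hTpow : (0:ℝ) < T ^ (κ - 1) := pow_pos hT _
    have h := mul_lt_mul_of_pos_right hyl hTpow
    have hTT : T * T ^ (κ - 1) = T ^ κ := by
      rw [← pow_succ']; congr 1; omega
    calc θ1 = θ1 / θ3 * θ3 := by field_simp
      _ = θ1 / θ3 * (T * T ^ (κ - 1)) := by rw [hTT, hTκ]
      _ = θ1 / θ3 * T * T ^ (κ - 1) := by ring
      _ < y * T ^ (κ - 1) := h
  have hQtop : y * β ^ (κ - 1) * T ^ (κ - 1 - (κ - 1)) < θ2 := by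
    simp only [Nat.sub_self, pow_zero, mul_one]
    calc y * β ^ (κ - 1) < β * β ^ (κ - 1) :=
          mul_lt_mul_of_pos_right hyβ (pow_pos hβ0 _)
      _ = β ^ (κ - 1 + 1) := (pow_succ' β (κ - 1)).symm
      _ = θ2 := by rw [show κ - 1 + 1 = κ from by omega, hβκ]
  have hex : ∃ b : ℕ, y * β ^ b * T ^ (κ - 1 - b) < θ2 := ⟨κ - 1, hQtop⟩
  classical
  set b0 := Nat.find hex with hb0def
  have hb0P : y * β ^ b0 * T ^ (κ - 1 - b0) < θ2 := Nat.find_spec hex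
  have hmin : ∀ m, m < b0 → ¬ (y * β ^ m * T ^ (κ - 1 - m) < θ2) :=
    fun m hm => Nat.find_min hex hm
  have hb0κ : b0 ≤ κ - 1 := Nat.find_min' hex hQtop
  clear_value b0
  have hb00 : b0 ≠ 0 := by
    intro h0
    rw [h0] at hb0P
    simp only [pow_zero, mul_one] at hb0P
    exact KEY3 1 0 (κ - 1) (by omega) (by simpa using hv1) (by simpa using hb0P)
  have hb0le : y * β ^ b0 * T ^ (κ - 1 - b0) ≤ θ1 := by
    by_contra hcon
    push_neg at hcon
    exact KEY3 1 b0 (κ - 1 - b0) (by omega) (by simpa using hcon) (by simpa using hb0P)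
  have hb0ge : θ2 ≤ y * β ^ (b0 - 1) * T ^ (κ - 1 - (b0 - 1)) :=
    not_lt.mp (hmin (b0 - 1) (by omega))
  obtain ⟨b1, hb1⟩ : ∃ b1, b0 = b1 + 1 := ⟨b0 - 1, by omega⟩
  subst hb1
  have hd1 : κ - 1 - b1 = (κ - 1 - (b1 + 1)) + 1 := by omega
  rw [show b1 + 1 - 1 = b1 from rfl, hd1] at hb0ge
  have e1 : θ2 * β ≤ θ1 * T := by
    calc θ2 * β ≤ (y * β ^ b1 * T ^ ((κ - 1 - (b1 + 1)) + 1)) * β :=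
          mul_le_mul_of_nonneg_right hb0ge hβ0.le
      _ = (y * β ^ (b1 + 1) * T ^ (κ - 1 - (b1 + 1))) * T := by ring
      _ ≤ θ1 * T := mul_le_mul_of_nonneg_right hb0le hT.le
  have e2 : (θ2 * β) ^ κ ≤ (θ1 * T) ^ κ :=
    pow_le_pow_left₀ (by positivity) e1 κ
  calc θ2 ^ (κ + 1) = θ2 ^ κ * β ^ κ := by rw [hβκ, pow_succ]
    _ = (θ2 * β) ^ κ := (mul_pow _ _ _).symm
    _ ≤ (θ1 * T) ^ κ := e2
    _ = θ1 ^ κ * θ3 := by rw [mul_pow, hTκ]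

lemma final_iii (hκ : 2 ≤ κ) (h1 : 0 < θ1) (h12 : θ1 < θ2) (h23 : θ2 < θ3)
    (hC1 : θ2 ^ (κ + 1) ≤ θ1 ^ κ * θ3) (hB : θ1 * θ3 ≤ θ2 ^ 2) : False := by
  have h2pos : (0:ℝ) < θ2 := by linarith
  have h5 : θ1 ^ κ * θ3 = θ1 ^ (κ - 1) * (θ1 * θ3) := by
    rw [← mul_assoc, ← pow_succ]
    congr 2
    omega
  have h6 : θ1 ^ (κ - 1) * (θ1 * θ3) ≤ θ1 ^ (κ - 1) * θ2 ^ 2 :=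
    mul_le_mul_of_nonneg_left hB (by positivity)
  have h7 : θ2 ^ (κ + 1) = θ2 ^ (κ - 1) * θ2 ^ 2 := by
    rw [← pow_add]
    congr 1
    omega
  have h8 : θ2 ^ (κ - 1) ≤ θ1 ^ (κ - 1) := by
    have h2sq : (0:ℝ) < θ2 ^ 2 := by positivity
    nlinarith
  have h9 : θ1 ^ (κ - 1) < θ2 ^ (κ - 1) :=
    pow_lt_pow_left₀ h12 h1.le (by omega)
  linarith

end Endgame

section Trans
variable {θ1 θ2 θ3 : ℝ} {κ : ℕ} {ιs ιss : ℤ}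

lemma floor_ratio_ge {L : ℝ} {w : ℝ} (hw : 0 < w) {m : ℕ}
    (h : (m : ℤ) ≤ ⌊L / w⌋) : (m : ℝ) * w ≤ L := by
  have h2 : (m : ℝ) ≤ L / w := by exact_mod_cast Int.le_floor.mp h
  calc (m : ℝ) * w ≤ (L / w) * w := mul_le_mul_of_nonneg_right h2 hw.le
    _ = L := by field_simp

lemma floor_ratio_lt {L : ℝ} {w : ℝ} (hw : 0 < w) {m : ℕ}
    (h : ⌊L / w⌋ < (m : ℤ)) : L < (m : ℝ) * w := by
  have h2 : L / w < (m : ℝ) := by exact_mod_cast Int.floor_lt.mp h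
  calc L = (L / w) * w := by field_simp
    _ < (m : ℝ) * w := mul_lt_mul_of_pos_right h2 hw

lemma ratio_le_floor {L : ℝ} {w : ℝ} (hw : 0 < w) {m : ℕ}
    (h : (m : ℝ) * w ≤ L) : (m : ℤ) ≤ ⌊L / w⌋ := by
  rw [Int.le_floor]
  push_cast
  rw [le_div_iff₀ hw]
  exact h

lemma trans_iii (h1 : 0 < θ1) (h12 : θ1 < θ2) (h23 : θ2 < θ3)
    (hs : ιs = 1 + ⌊Real.log (θ3 / θ1) / Real.log (θ3 / θ2)⌋) (h3 : 3 ≤ ιs) :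
    θ1 * θ3 ≤ θ2 ^ 2 := by
  have h2p : (0:ℝ) < θ2 := by linarith
  have h3p : (0:ℝ) < θ3 := by linarith
  have hw : 0 < Real.log (θ3 / θ2) := Real.log_pos ((one_lt_div h2p).mpr h23)
  have hfl : (2 : ℤ) ≤ ⌊Real.log (θ3 / θ1) / Real.log (θ3 / θ2)⌋ := by omega
  have h := floor_ratio_ge hw (m := 2) (by exact_mod_cast hfl)
  have hlog : Real.log ((θ3 / θ2) ^ 2) ≤ Real.log (θ3 / θ1) := by
    rw [Real.log_pow]; push_cast; linarith
  have hx : (0:ℝ) < (θ3 / θ2) ^ 2 := pow_pos (div_pos h3p h2p) 2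
  have hy : (0:ℝ) < θ3 / θ1 := div_pos h3p h1
  have hle : (θ3 / θ2) ^ 2 ≤ θ3 / θ1 := (Real.log_le_log_iff hx hy).mp hlog
  rw [div_pow, div_le_div_iff₀ (pow_pos h2p _) h1] at hle
  nlinarith

lemma trans_iv (h1 : 0 < θ1) (h12 : θ1 < θ2) (h23 : θ2 < θ3)
    (hs : ιs = 1 + ⌊Real.log (θ3 / θ1) / Real.log (θ3 / θ2)⌋) (h4 : 4 ≤ ιs) :
    θ1 * θ3 ^ 2 ≤ θ2 ^ 3 := by
  have h2p : (0:ℝ) < θ2 := by linarith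
  have h3p : (0:ℝ) < θ3 := by linarith
  have hw : 0 < Real.log (θ3 / θ2) := Real.log_pos ((one_lt_div h2p).mpr h23)
  have hfl : (3 : ℤ) ≤ ⌊Real.log (θ3 / θ1) / Real.log (θ3 / θ2)⌋ := by omega
  have h := floor_ratio_ge hw (m := 3) (by exact_mod_cast hfl)
  have hlog : Real.log ((θ3 / θ2) ^ 3) ≤ Real.log (θ3 / θ1) := by
    rw [Real.log_pow]; push_cast; linarith
  have hle : (θ3 / θ2) ^ 3 ≤ θ3 / θ1 :=
    (Real.log_le_log_iff (pow_pos (div_pos h3p h2p) 3) (div_pos h3p h1)).mp hlog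
  rw [div_pow, div_le_div_iff₀ (pow_pos h2p _) h1] at hle
  nlinarith [pow_pos (show (0:ℝ) < θ3 by linarith) 2, sq_nonneg θ3]

lemma trans_v (h1 : 0 < θ1) (h12 : θ1 < θ2) (h23 : θ2 < θ3)
    (hss : ιss = 1 + ⌊Real.log (θ3 / θ2) / Real.log (θ2 / θ1)⌋) (hv : ιss = 1) :
    θ1 * θ3 < θ2 ^ 2 := by
  have h2p : (0:ℝ) < θ2 := by linarith
  have h3p : (0:ℝ) < θ3 := by linarith
  have hw : 0 < Real.log (θ2 / θ1) := Real.log_pos ((one_lt_div h1).mpr h12)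
  have hfl : ⌊Real.log (θ3 / θ2) / Real.log (θ2 / θ1)⌋ < (1 : ℤ) := by omega
  have h := floor_ratio_lt hw (m := 1) (by exact_mod_cast hfl)
  have hlog : Real.log (θ3 / θ2) < Real.log (θ2 / θ1) := by push_cast at h; linarith
  have hlt : θ3 / θ2 < θ2 / θ1 :=
    (Real.log_lt_log_iff (div_pos h3p h2p) (div_pos h2p h1)).mp hlog
  rw [div_lt_div_iff₀ h2p h1] at hlt
  nlinarith

lemma trans_i (hκ : 2 ≤ κ) (h1 : 0 < θ1) (h12 : θ1 < θ2) (h23 : θ2 < θ3)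
    (hss : ιss = 1 + ⌊Real.log (θ3 / θ2) / Real.log (θ2 / θ1)⌋) (hi : ιss ≤ (κ : ℤ)) :
    θ1 ^ κ * θ3 < θ2 ^ (κ + 1) := by
  have h2p : (0:ℝ) < θ2 := by linarith
  have h3p : (0:ℝ) < θ3 := by linarith
  have hw : 0 < Real.log (θ2 / θ1) := Real.log_pos ((one_lt_div h1).mpr h12)
  have hfl : ⌊Real.log (θ3 / θ2) / Real.log (θ2 / θ1)⌋ < (κ : ℤ) := by omega
  have h := floor_ratio_lt hw (m := κ) (by exact_mod_cast hfl)
  have hlog : Real.log (θ3 / θ2) < Real.log ((θ2 / θ1) ^ κ) := by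
    rw [Real.log_pow]; linarith
  have hlt : θ3 / θ2 < (θ2 / θ1) ^ κ :=
    (Real.log_lt_log_iff (div_pos h3p h2p) (pow_pos (div_pos h2p h1) κ)).mp hlog
  rw [div_pow, div_lt_div_iff₀ h2p (pow_pos h1 κ)] at hlt
  calc θ1 ^ κ * θ3 = θ3 * θ1 ^ κ := by ring
    _ < θ2 ^ κ * θ2 := hlt
    _ = θ2 ^ (κ + 1) := (pow_succ θ2 κ).symm

lemma trans_ii (hκ : 2 ≤ κ) (h1 : 0 < θ1) (h12 : θ1 < θ2) (h23 : θ2 < θ3)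
    (hss : ιss = 1 + ⌊Real.log (θ3 / θ2) / Real.log (θ2 / θ1)⌋)
    (hC1 : θ2 ^ (κ + 1) ≤ θ1 ^ κ * θ3) : (κ : ℤ) + 1 ≤ ιss := by
  have h2p : (0:ℝ) < θ2 := by linarith
  have h3p : (0:ℝ) < θ3 := by linarith
  have hw : 0 < Real.log (θ2 / θ1) := Real.log_pos ((one_lt_div h1).mpr h12)
  have hle : (θ2 / θ1) ^ κ ≤ θ3 / θ2 := by
    rw [div_pow, div_le_div_iff₀ (pow_pos h1 κ) h2p]
    calc θ2 ^ κ * θ2 = θ2 ^ (κ + 1) := (pow_succ θ2 κ).symm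
      _ ≤ θ1 ^ κ * θ3 := hC1
      _ = θ3 * θ1 ^ κ := by ring
  have hlog : Real.log ((θ2 / θ1) ^ κ) ≤ Real.log (θ3 / θ2) :=
    (Real.log_le_log_iff (pow_pos (div_pos h2p h1) κ) (div_pos h3p h2p)).mpr hle
  rw [Real.log_pow] at hlog
  have := ratio_le_floor hw (m := κ) hlog
  omega

end Trans

theorem stmt15 (a : ℕ → ℝ) (μ ν : Measure ℝ) (κ : ℕ) (hκ : 2 ≤ κ)
    (hμ : IsRepMeas a μ)
    (hν : IsRepMeas (fun n => a n ^ (1 / (κ : ℝ))) ν)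
    (θ1 θ2 θ3 : ℝ) (h1 : 0 < θ1) (h12 : θ1 < θ2) (h23 : θ2 < θ3)
    (hθ3 : IsLUB (msupport μ) θ3)
    (hhole : μ (Set.Ioo θ1 θ2) = 0)
    (α β : ℝ)
    (hα : α = θ1 / θ3 * θ3 ^ (1 / (κ : ℝ)))
    (hβ : β = θ2 ^ (1 / (κ : ℝ)))
    (ιs ιss : ℤ)
    (hs : ιs = 1 + ⌊Real.log (θ3 / θ1) / Real.log (θ3 / θ2)⌋)
    (hss : ιss = 1 + ⌊Real.log (θ3 / θ2) / Real.log (θ2 / θ1)⌋)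
    (hcond : (ιss ≤ (κ : ℤ) ∧ β ∈ msupport ν) ∨
      (ιss ≤ ιs ∧ β ∈ msupport ν) ∨
      (3 ≤ ιs ∧ β ∈ msupport ν) ∨
      4 ≤ ιs ∨
      ιss = 1) :
    ν (Set.Ioo α β) = 0 := by
  have h2p : (0:ℝ) < θ2 := by linarith
  have h3p : (0:ℝ) < θ3 := by linarith
  have hκ0 : κ ≠ 0 := by omega
  have hκℝ : (0:ℝ) < (κ : ℝ) := by exact_mod_cast Nat.pos_of_ne_zero hκ0
  have h1κpos : (0:ℝ) < 1 / (κ : ℝ) := by positivity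
  haveI hμfin : IsFiniteMeasure μ := rep_finite hμ
  haveI hνfin : IsFiniteMeasure ν := rep_finite hν
  set T := θ3 ^ (1 / (κ : ℝ)) with hTdef
  have hTpos : 0 < T := Real.rpow_pos_of_pos h3p _
  have hTκ : T ^ κ = θ3 := rpow_one_div_pow h3p.le hκ0
  have hβpos : 0 < β := by rw [hβ]; exact Real.rpow_pos_of_pos h2p _
  have hβκ : β ^ κ = θ2 := by rw [hβ]; exact rpow_one_div_pow h2p.le hκ0
  have hβT : β < T := by
    rw [hβ, hTdef]
    exact Real.rpow_lt_rpow h2p.le h23 h1κpos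
  -- μ support facts
  have hθ3mem : θ3 ∈ msupport μ := theta3_mem hθ3
  have hμIoi : μ (Ioi θ3) = 0 :=
    msupport_null (fun z hz hmem => absurd (hθ3.1 hmem) (not_le.mpr hz))
  have hμae : ∀ᵐ x ∂μ, x ∈ Icc 0 θ3 := by
    rw [ae_iff]
    have hsub : {x : ℝ | ¬ x ∈ Icc 0 θ3} ⊆ Iio 0 ∪ Ioi θ3 := by
      intro x hx
      simp only [mem_setOf_eq, mem_Icc, not_and_or, not_le] at hx
      rcases hx with h | h
      · exact Or.inl h
      · exact Or.inr h
    exact measure_mono_null hsub (measure_union_null hμ.2.1 hμIoi)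
  have hμuniv : μ univ = ENNReal.ofReal (a 0) := rep_univ hμ
  have ha := hμ.1
  have hareal : ∀ n, a n ≤ a 0 * θ3 ^ n := by
    intro n
    have h := lint_upper hμae n
    rw [hμ.2.2 n, hμuniv, ← ENNReal.ofReal_mul (pow_nonneg h3p.le n)] at h
    have h2 := (ENNReal.ofReal_le_ofReal_iff
      (mul_nonneg (pow_nonneg h3p.le n) (ha 0))).mp h
    linarith
  -- moments of ν (sequence b n = a n ^ (1/κ))
  have hbmom : ∀ n : ℕ, ∫⁻ x, ENNReal.ofReal (x ^ n) ∂ν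
      = ENNReal.ofReal (a n ^ (1 / (κ:ℝ))) := fun n => hν.2.2 n
  have hbnn : ∀ n, 0 ≤ a n ^ (1 / (κ:ℝ)) := fun n => Real.rpow_nonneg (ha n) _
  have hνuniv : ν univ = ENNReal.ofReal (a 0 ^ (1 / (κ:ℝ))) := rep_univ hν
  -- upper bound for msupport ν
  have hνsup : ∀ x ∈ msupport ν, x ≤ T := by
    intro x hx
    by_contra hcon
    push_neg at hcon
    set u := (T + x) / 2 with hudef
    have hu1 : T < u := by rw [hudef]; linarith
    have hu2 : u < x := by rw [hudef]; linarith
    have hu0 : 0 < u := lt_trans hTpos hu1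
    have hc : 0 < ν (Ioi u) := hx (Ioi u) isOpen_Ioi hu2
    have hcfin : ν (Ioi u) ≠ ∞ := (measure_lt_top ν _).ne
    set c := (ν (Ioi u)).toReal with hcdef
    have hcpos : 0 < c := ENNReal.toReal_pos hc.ne' hcfin
    refine growth_contra hcpos hTpos hu1 (C := a 0 ^ (1 / (κ:ℝ))) fun n => ?_
    have hlow := lint_lower hu0.le (ρ := ν) n
    rw [hbmom n] at hlow
    have hlowR : u ^ n * c ≤ a n ^ (1 / (κ:ℝ)) := by
      have h1' := ENNReal.toReal_mono ENNReal.ofReal_ne_top hlow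
      rwa [ENNReal.toReal_mul, ENNReal.toReal_ofReal (pow_nonneg hu0.le n),
        ENNReal.toReal_ofReal (hbnn n)] at h1'
    have hup : a n ^ (1 / (κ:ℝ)) ≤ a 0 ^ (1 / (κ:ℝ)) * T ^ n := by
      calc a n ^ (1 / (κ:ℝ)) ≤ (a 0 * θ3 ^ n) ^ (1 / (κ:ℝ)) :=
            Real.rpow_le_rpow (ha n) (hareal n) h1κpos.le
        _ = a 0 ^ (1 / (κ:ℝ)) * (θ3 ^ n) ^ (1 / (κ:ℝ)) :=
            Real.mul_rpow (ha 0) (pow_nonneg h3p.le n)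
        _ = a 0 ^ (1 / (κ:ℝ)) * T ^ n := by
            rw [pow_rpow_comm h3p.le (1 / (κ:ℝ)) n]
    calc c * u ^ n = u ^ n * c := by ring
      _ ≤ a n ^ (1 / (κ:ℝ)) := hlowR
      _ ≤ a 0 ^ (1 / (κ:ℝ)) * T ^ n := hup
  have hνIoiT : ν (Ioi T) = 0 :=
    msupport_null (fun z hz hmem => absurd (hνsup z hmem) (not_le.mpr hz))
  have hνae : ∀ᵐ x ∂ν, x ∈ Icc 0 T := by
    rw [ae_iff]
    have hsub : {x : ℝ | ¬ x ∈ Icc 0 T} ⊆ Iio 0 ∪ Ioi T := by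
      intro x hx
      simp only [mem_setOf_eq, mem_Icc, not_and_or, not_le] at hx
      rcases hx with h | h
      · exact Or.inl h
      · exact Or.inr h
    exact measure_mono_null hsub (measure_union_null hν.2.1 hνIoiT)
  -- T ∈ msupport ν
  have hTmem : T ∈ msupport ν := by
    by_contra hT
    simp only [msupport, mem_setOf_eq] at hT
    push_neg at hT
    obtain ⟨U, hUo, hTU, hU0⟩ := hT
    have hU0' : ν U = 0 := le_antisymm hU0 zero_le
    obtain ⟨ε, hε, hball⟩ := Metric.isOpen_iff.mp hUo T hTU
    set v := max (T - ε) (T / 2) with hvdef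
    have hv0 : 0 < v := lt_of_lt_of_le (half_pos hTpos) (le_max_right _ _)
    have hvT : v < T := max_lt (by linarith) (by linarith)
    have hν1 : ν (Ioo (T - ε) (T + ε)) = 0 := by
      refine measure_mono_null (fun z hz => hball ?_) hU0'
      rw [Real.ball_eq_Ioo]
      exact hz
    have hν2 : ν (Ioi v) = 0 := by
      have hsplit : Ioi v ⊆ Ioo (T - ε) (T + ε) ∪ Ioi T := by
        intro z hz
        rcases le_or_gt z T with hzT | hzT
        · left
          constructor
          · have : T - ε ≤ v := le_max_left _ _
            simp only [mem_Ioi] at hz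
            linarith
          · linarith
        · exact Or.inr hzT
      exact measure_mono_null hsplit (measure_union_null hν1 hνIoiT)
    have hνae2 : ∀ᵐ x ∂ν, x ∈ Icc 0 v := by
      rw [ae_iff]
      have hsub : {x : ℝ | ¬ x ∈ Icc 0 v} ⊆ Iio 0 ∪ Ioi v := by
        intro x hx
        simp only [mem_setOf_eq, mem_Icc, not_and_or, not_le] at hx
        rcases hx with h | h
        · exact Or.inl h
        · exact Or.inr h
      exact measure_mono_null hsub (measure_union_null hν.2.1 hν2)
    -- upper bound on a n
    have hup : ∀ n, a n ≤ (a 0 ^ (1 / (κ:ℝ))) ^ κ * (v ^ κ) ^ n := by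
      intro n
      have h := lint_upper hνae2 n
      rw [hbmom n, hνuniv, ← ENNReal.ofReal_mul (pow_nonneg hv0.le n)] at h
      have h2' := (ENNReal.ofReal_le_ofReal_iff
        (mul_nonneg (pow_nonneg hv0.le n) (Real.rpow_nonneg (ha 0) _))).mp h
      -- h2' : a n ^ (1/κ) ≤ v ^ n * a 0 ^ (1/κ)
      have h3' : (a n ^ (1 / (κ:ℝ))) ^ κ ≤ (v ^ n * a 0 ^ (1 / (κ:ℝ))) ^ κ :=
        pow_le_pow_left₀ (hbnn n) h2' κ
      rw [rpow_one_div_pow (ha n) hκ0] at h3'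
      calc a n ≤ (v ^ n * a 0 ^ (1 / (κ:ℝ))) ^ κ := h3'
        _ = (a 0 ^ (1 / (κ:ℝ))) ^ κ * (v ^ κ) ^ n := by
            rw [mul_pow, ← pow_mul, ← pow_mul, mul_comm n κ]
            ring
    have hvκ : v ^ κ < θ3 := by
      rw [← hTκ]
      exact pow_lt_pow_left₀ hvT hv0.le hκ0
    set w := (v ^ κ + θ3) / 2 with hwdef
    have hvκ0 : 0 < v ^ κ := pow_pos hv0 κ
    have hw1 : v ^ κ < w := by rw [hwdef]; linarith
    have hw2 : w < θ3 := by rw [hwdef]; linarith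
    have hw0 : 0 < w := lt_trans hvκ0 hw1
    have hμw : 0 < μ (Ioi w) := hθ3mem (Ioi w) isOpen_Ioi hw2
    set m := (μ (Ioi w)).toReal with hmdef
    have hmpos : 0 < m := ENNReal.toReal_pos hμw.ne' (measure_lt_top μ _).ne
    refine growth_contra hmpos hvκ0 hw1 (C := (a 0 ^ (1 / (κ:ℝ))) ^ κ) fun n => ?_
    have hlow := lint_lower hw0.le (ρ := μ) n
    rw [hμ.2.2 n] at hlow
    have hlowR : w ^ n * m ≤ a n := by
      have h1' := ENNReal.toReal_mono ENNReal.ofReal_ne_top hlow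
      rwa [ENNReal.toReal_mul, ENNReal.toReal_ofReal (pow_nonneg hw0.le n),
        ENNReal.toReal_ofReal (ha n)] at h1'
    calc m * w ^ n = w ^ n * m := by ring
      _ ≤ a n := hlowR
      _ ≤ (a 0 ^ (1 / (κ:ℝ))) ^ κ * (v ^ κ) ^ n := hup n
  -- moments of the κ-fold multiplicative convolution
  have hν0ae : ∀ᵐ z ∂ν, 0 ≤ z := rep_ae_nonneg hν
  haveI hmpfin : IsFiniteMeasure (mp ν κ) := mp_finite ν κ
  set M := max T 1 with hMdef
  have hM1 : (1:ℝ) ≤ M := le_max_right _ _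
  have hνaeM : ∀ᵐ x ∂ν, x ∈ Icc 0 M :=
    hνae.mono fun x hx => ⟨hx.1, hx.2.trans (le_max_left _ _)⟩
  have hmpae : ∀ᵐ x ∂(mp ν κ), x ∈ Icc 0 (M ^ κ) := mp_ae hM1 hνaeM κ
  set R := max θ3 (M ^ κ) with hRdef
  have hR3 : θ3 ≤ R := le_max_left _ _
  have hRM : M ^ κ ≤ R := le_max_right _ _
  have hR0 : (0:ℝ) ≤ R := le_trans h3p.le hR3
  have hμaeR : ∀ᵐ x ∂μ, x ∈ Icc (-R) R :=
    hμae.mono fun x hx => ⟨by linarith [hx.1], hx.2.trans hR3⟩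
  have hmpaeR : ∀ᵐ x ∂(mp ν κ), x ∈ Icc (-R) R :=
    hmpae.mono fun x hx => ⟨by linarith [hx.1], hx.2.trans hRM⟩
  have hmommp : ∀ n : ℕ, ∫ x, x ^ n ∂(mp ν κ) = a n := by
    intro n
    have hl : ∫⁻ x, ENNReal.ofReal (x ^ n) ∂(mp ν κ) = ENNReal.ofReal (a n) := by
      rw [mp_moment hν0ae n κ, hbmom n, ← ENNReal.ofReal_pow (hbnn n),
        rpow_one_div_pow (ha n) hκ0]
    have hae0 : 0 ≤ᵐ[mp ν κ] fun x : ℝ => x ^ n :=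
      hmpae.mono fun x hx => pow_nonneg hx.1 n
    rw [integral_eq_lintegral_of_nonneg_ae hae0
      ((continuous_pow n).measurable.aestronglyMeasurable), hl,
      ENNReal.toReal_ofReal (ha n)]
  have hmom : ∀ n : ℕ, ∫ x, x ^ n ∂μ = ∫ x, x ^ n ∂(mp ν κ) := by
    intro n
    rw [moment_integral hμ n, hmommp n]
  -- products of κ support points of ν avoid the hole
  have KEY : ∀ l : List ℝ, l.length = κ → (∀ z ∈ l, z ∈ msupport ν ∧ 0 < z) →
      θ1 < l.prod → l.prod < θ2 → False := by
    intro l hlen hl hp1 hp2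
    refine key_hole hμaeR hmpaeR hmom hp1 hp2 ?_ hhole
    intro ε hε
    have h := spt_mp l (fun z hz => ⟨(hl z hz).2.le, fun δ hδ =>
      (hl z hz).1 (Ioo (z - δ) (z + δ)) isOpen_Ioo ⟨by linarith, by linarith⟩⟩) ε hε
    rwa [hlen] at h
  have KEYgen : ∀ (j b c : ℕ), j + b + c = κ →
      ∀ u v w : ℝ, (u ∈ msupport ν ∧ 0 < u) → (v ∈ msupport ν ∧ 0 < v) →
      (w ∈ msupport ν ∧ 0 < w) →
      θ1 < u ^ j * v ^ b * w ^ c → u ^ j * v ^ b * w ^ c < θ2 → False := by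
    intro j b c habc u v w hu hv hw hp1 hp2
    set l := List.replicate j u ++ (List.replicate b v ++ List.replicate c w) with hldef
    have hlen : l.length = κ := by
      simp only [hldef, List.length_append, List.length_replicate]
      omega
    have hmem : ∀ z ∈ l, z ∈ msupport ν ∧ 0 < z := by
      intro z hz
      simp only [hldef, List.mem_append, List.mem_replicate] at hz
      rcases hz with ⟨_, rfl⟩ | ⟨_, rfl⟩ | ⟨_, rfl⟩
      · exact hu
      · exact hv
      · exact hw
    have hprod : l.prod = u ^ j * v ^ b * w ^ c := by
      simp only [hldef, List.prod_append, List.prod_replicate]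
      ring
    exact KEY l hlen hmem (hprod ▸ hp1) (hprod ▸ hp2)
  -- conclude : no support point of ν in (α, β)
  apply msupport_null
  intro y hy hymem
  have hy1 : θ1 / θ3 * T < y := by
    have := hy.1
    rw [hα] at this
    exact this
  have hy2 : y < β := hy.2
  have hαpos : 0 < θ1 / θ3 * T := by positivity
  have hy0 : 0 < y := lt_trans hαpos hy1
  have hyT : y < T := lt_trans hy2 hβT
  have hyκ : y ^ κ < θ2 := by
    rw [← hβκ]
    exact pow_lt_pow_left₀ hy2 hy0.le hκ0
  have KEY2 : ∀ j c : ℕ, j + c = κ → θ1 < y ^ j * T ^ c → y ^ j * T ^ c < θ2 → False := by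
    intro j c hjc hA hB
    refine KEYgen j 0 c (by omega) y T T ⟨hymem, hy0⟩ ⟨hTmem, hTpos⟩ ⟨hTmem, hTpos⟩ ?_ ?_
    · simpa using hA
    · simpa using hB
  rcases hcond with ⟨hi, hβmem⟩ | ⟨hii, hβmem⟩ | ⟨hiii, hβmem⟩ | hiv | hv
  · -- case (i)
    have KEY3 : ∀ j b c : ℕ, j + b + c = κ → θ1 < y ^ j * β ^ b * T ^ c
        → y ^ j * β ^ b * T ^ c < θ2 → False := by
      intro j b c habc hA hB
      exact KEYgen j b c habc y β T ⟨hymem, hy0⟩ ⟨hβmem, hβpos⟩ ⟨hTmem, hTpos⟩ hA hB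
    have hC1 := endgame_C1 hκ h1 h12 h23 hTκ hTpos hβκ hβpos hy0 hy1 hy2 KEY3
    have := trans_i hκ h1 h12 h23 hss hi
    linarith
  · -- case (ii)
    have KEY3 : ∀ j b c : ℕ, j + b + c = κ → θ1 < y ^ j * β ^ b * T ^ c
        → y ^ j * β ^ b * T ^ c < θ2 → False := by
      intro j b c habc hA hB
      exact KEYgen j b c habc y β T ⟨hymem, hy0⟩ ⟨hβmem, hβpos⟩ ⟨hTmem, hTpos⟩ hA hB
    have hC1 := endgame_C1 hκ h1 h12 h23 hTκ hTpos hβκ hβpos hy0 hy1 hy2 KEY3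
    have hκss := trans_ii hκ h1 h12 h23 hss hC1
    have h3s : 3 ≤ ιs := by omega
    exact final_iii hκ h1 h12 h23 hC1 (trans_iii h1 h12 h23 hs h3s)
  · -- case (iii)
    have KEY3 : ∀ j b c : ℕ, j + b + c = κ → θ1 < y ^ j * β ^ b * T ^ c
        → y ^ j * β ^ b * T ^ c < θ2 → False := by
      intro j b c habc hA hB
      exact KEYgen j b c habc y β T ⟨hymem, hy0⟩ ⟨hβmem, hβpos⟩ ⟨hTmem, hTpos⟩ hA hB
    have hC1 := endgame_C1 hκ h1 h12 h23 hTκ hTpos hβκ hβpos hy0 hy1 hy2 KEY3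
    exact final_iii hκ h1 h12 h23 hC1 (trans_iii h1 h12 h23 hs hiii)
  · -- case (iv)
    exact endgame_iv hκ h1 h12 h23 hTκ hTpos hy0 hy1 hyT hyκ KEY2
      (trans_iv h1 h12 h23 hs hiv)
  · -- case (v)
    exact endgame_v hκ h1 h12 h23 hTκ hTpos hy0 hy1 hyT hyκ KEY2
      (trans_v h1 h12 h23 hss hv)
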